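/- Let X be a real normed linear space, A, B ⊆ X nonempty, and x̄ ∈ A ∩ B. Then the following two conditions are equivalent: (i) for every ε > 0 there exist points a ∈ A ∩ B_ε(x̄), b ∈ B ∩ B_ε(x̄) and a functional a* in the continuous dual X* such that ‖a*‖ = 1, d(a*, N_A(a)) < ε and d(−a*, N_B(b)) < ε; (ii) for every ε > 0 there exist points a ∈ A ∩ B_ε(x̄), b ∈ B ∩ B_ε(x̄) and functionals a* ∈ N_A(a), b* ∈ N_B(b) such that ‖a*‖ + ‖b*‖ = 1 and ‖a* + b*‖ < ε. -/

import Mathlib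

open Metric

/-- The Fréchet normal cone to `A` at `a`, as a subset of the continuous dual. -/
def frechetNormalCone {X : Type*} [NormedAddCommGroup X] [NormedSpace ℝ X]
    (A : Set X) (a : X) : Set (StrongDual ℝ X) :=
  {x' | ∀ ε > (0 : ℝ), ∃ δ > (0 : ℝ), ∀ x ∈ A, 0 < ‖x - a‖ → ‖x - a‖ < δ →
    x' (x - a) ≤ ε * ‖x - a‖}

lemma zero_mem_frechetNormalCone {X : Type*} [NormedAddCommGroup X] [NormedSpace ℝ X]
    (A : Set X) (a : X) : (0 : StrongDual ℝ X) ∈ frechetNormalCone A a := by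
  intro ε hε
  exact ⟨1, one_pos, fun x _ h1 _ => by simpa using by positivity⟩

lemma smul_mem_frechetNormalCone {X : Type*} [NormedAddCommGroup X] [NormedSpace ℝ X]
    {A : Set X} {a : X} {x' : StrongDual ℝ X}
    (hx' : x' ∈ frechetNormalCone A a) {t : ℝ} (ht : 0 ≤ t) :
    t • x' ∈ frechetNormalCone A a := by
  rcases ht.eq_or_lt with h | h
  · rw [← h, zero_smul]; exact zero_mem_frechetNormalCone A a
  · intro ε hε
    obtain ⟨δ, hδ, hd⟩ := hx' (ε / t) (by positivity)
    refine ⟨δ, hδ, fun x hx h1 h2 => ?_⟩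
    have := hd x hx h1 h2
    simp only [ContinuousLinearMap.smul_apply, smul_eq_mul]
    calc t * x' (x - a) ≤ t * (ε / t * ‖x - a‖) := by nlinarith
      _ = ε * ‖x - a‖ := by field_simp

/-- Equivalence of the two generalized separation conditions in the extremal principle. -/
theorem stmt_3 {X : Type*} [NormedAddCommGroup X] [NormedSpace ℝ X]
    (A B : Set X) (hAne : A.Nonempty) (hBne : B.Nonempty)
    (xb : X) (hxb : xb ∈ A ∩ B) :
    ((∀ ε > (0 : ℝ), ∃ a ∈ A ∩ ball xb ε, ∃ b ∈ B ∩ ball xb ε,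
        ∃ a' : StrongDual ℝ X, ‖a'‖ = 1 ∧
          Metric.infDist a' (frechetNormalCone A a) < ε ∧
          Metric.infDist (-a') (frechetNormalCone B b) < ε) ↔
      (∀ ε > (0 : ℝ), ∃ a ∈ A ∩ ball xb ε, ∃ b ∈ B ∩ ball xb ε,
        ∃ a' ∈ frechetNormalCone A a, ∃ b' ∈ frechetNormalCone B b,
          ‖a'‖ + ‖b'‖ = 1 ∧ ‖a' + b'‖ < ε)) := by
  constructor
  · -- (i) → (ii)
    intro H ε hε
    set ε' : ℝ := min ε 1 / 2 with hε'def
    have hε'pos : 0 < ε' := by positivity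
    have hε'le : ε' ≤ ε / 2 := by
      have : min ε 1 ≤ ε := min_le_left _ _
      linarith
    have hε'half : ε' ≤ 1 / 2 := by
      have : min ε 1 ≤ 1 := min_le_right _ _
      linarith
    obtain ⟨a, ⟨haA, haB⟩, b, ⟨hbB, hbb⟩, a', hna, hdA, hdB⟩ := H ε' hε'pos
    have hballa : a ∈ ball xb ε := ball_subset_ball (by linarith) haB
    have hballb : b ∈ ball xb ε := ball_subset_ball (by linarith) hbb
    obtain ⟨u, huA, hdu⟩ :=
      (Metric.infDist_lt_iff ⟨0, zero_mem_frechetNormalCone A a⟩).mp hdA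
    obtain ⟨v, hvB, hdv⟩ :=
      (Metric.infDist_lt_iff ⟨0, zero_mem_frechetNormalCone B b⟩).mp hdB
    rw [dist_eq_norm] at hdu hdv
    have hu : (1 : ℝ) - ε' ≤ ‖u‖ := by
      have := norm_sub_norm_le a' u
      linarith [hna ▸ this]
    have hv : (1 : ℝ) - ε' ≤ ‖v‖ := by
      have h1 : ‖-a'‖ - ‖v‖ ≤ ‖-a' - v‖ := norm_sub_norm_le _ _
      have h2 : ‖-a'‖ = 1 := by rw [norm_neg, hna]
      linarith
    set s : ℝ := ‖u‖ + ‖v‖ with hs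
    have hs1 : (1 : ℝ) ≤ s := by linarith
    have hspos : (0 : ℝ) < s := by linarith
    refine ⟨a, ⟨haA, hballa⟩, b, ⟨hbB, hballb⟩, s⁻¹ • u,
      smul_mem_frechetNormalCone huA (by positivity), s⁻¹ • v,
      smul_mem_frechetNormalCone hvB (by positivity), ?_, ?_⟩
    · rw [norm_smul, norm_smul, Real.norm_eq_abs, abs_of_pos (by positivity)]
      field_simp
      exact hs.symm
    · rw [← smul_add, norm_smul, Real.norm_eq_abs, abs_of_pos (by positivity)]
      have huv : ‖u + v‖ < 2 * ε' := by
        have : u + v = (u - a') + (a' + v) := by abel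
        rw [this]
        have h1 : ‖u - a'‖ < ε' := by rwa [norm_sub_rev] at hdu
        have h2 : ‖a' + v‖ < ε' := by
          have : a' + v = -(-a' - v) := by abel
          rw [this, norm_neg]; exact hdv
        calc ‖u - a' + (a' + v)‖ ≤ ‖u - a'‖ + ‖a' + v‖ := norm_add_le _ _
          _ < 2 * ε' := by linarith
      have hsi : s⁻¹ ≤ 1 := by
        rw [inv_le_one_iff₀]; right; exact hs1
      calc s⁻¹ * ‖u + v‖ ≤ 1 * ‖u + v‖ := by
            apply mul_le_mul_of_nonneg_right hsi (norm_nonneg _)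
        _ = ‖u + v‖ := one_mul _
        _ < 2 * ε' := huv
        _ ≤ ε := by linarith
  · -- (ii) → (i)
    intro H ε hε
    obtain ⟨a, ⟨haA, haB⟩, b, ⟨hbB, hbb⟩, a', ha', b', hb', hsum, hab⟩ :=
      H (ε / 2) (by positivity)
    have hballa : a ∈ ball xb ε := ball_subset_ball (by linarith) haB
    have hballb : b ∈ ball xb ε := ball_subset_ball (by linarith) hbb
    rcases le_total (1 / 2 : ℝ) ‖a'‖ with hbig | hsmall
    · have hpos : (0 : ℝ) < ‖a'‖ := by linarith
      set c : StrongDual ℝ X := ‖a'‖⁻¹ • a' with hc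
      have hcA : c ∈ frechetNormalCone A a :=
        smul_mem_frechetNormalCone ha' (by positivity)
      refine ⟨a, ⟨haA, hballa⟩, b, ⟨hbB, hballb⟩, c, ?_, ?_, ?_⟩
      · rw [hc, norm_smul, Real.norm_eq_abs, abs_of_pos (by positivity)]
        field_simp
      · calc Metric.infDist c (frechetNormalCone A a) ≤ dist c c :=
            Metric.infDist_le_dist_of_mem hcA
          _ = 0 := dist_self _
          _ < ε := hε
      · have hwB : ‖a'‖⁻¹ • b' ∈ frechetNormalCone B b :=
          smul_mem_frechetNormalCone hb' (by positivity)
        calc Metric.infDist (-c) (frechetNormalCone B b)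
            ≤ dist (-c) (‖a'‖⁻¹ • b') := Metric.infDist_le_dist_of_mem hwB
          _ = ‖a'‖⁻¹ * ‖a' + b'‖ := by
              rw [dist_eq_norm, hc]
              have : -(‖a'‖⁻¹ • a') - ‖a'‖⁻¹ • b' = ‖a'‖⁻¹ • (-(a' + b')) := by
                rw [smul_neg, smul_add]; abel
              rw [this, norm_smul, Real.norm_eq_abs, abs_of_pos (by positivity),
                norm_neg]
          _ ≤ 2 * ‖a' + b'‖ := by
              apply mul_le_mul_of_nonneg_right _ (norm_nonneg _)
              rw [inv_le_comm₀ hpos (by norm_num : (0:ℝ) < 2)] at *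
              linarith
          _ < ε := by linarith
    · have hbigb : (1 / 2 : ℝ) ≤ ‖b'‖ := by linarith
      have hpos : (0 : ℝ) < ‖b'‖ := by linarith
      set c : StrongDual ℝ X := -(‖b'‖⁻¹ • b') with hc
      have hcB : -c ∈ frechetNormalCone B b := by
        rw [hc, neg_neg]
        exact smul_mem_frechetNormalCone hb' (by positivity)
      refine ⟨a, ⟨haA, hballa⟩, b, ⟨hbB, hballb⟩, c, ?_, ?_, ?_⟩
      · rw [hc, norm_neg, norm_smul, Real.norm_eq_abs, abs_of_pos (by positivity)]
        field_simp
      · have hwA : ‖b'‖⁻¹ • a' ∈ frechetNormalCone A a :=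
          smul_mem_frechetNormalCone ha' (by positivity)
        calc Metric.infDist c (frechetNormalCone A a)
            ≤ dist c (‖b'‖⁻¹ • a') := Metric.infDist_le_dist_of_mem hwA
          _ = ‖b'‖⁻¹ * ‖a' + b'‖ := by
              rw [dist_eq_norm, hc]
              have : -(‖b'‖⁻¹ • b') - ‖b'‖⁻¹ • a' = ‖b'‖⁻¹ • (-(a' + b')) := by
                rw [smul_neg, smul_add]; abel
              rw [this, norm_smul, Real.norm_eq_abs, abs_of_pos (by positivity),
                norm_neg]
          _ ≤ 2 * ‖a' + b'‖ := by
              apply mul_le_mul_of_nonneg_right _ (norm_nonneg _)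
              rw [inv_le_comm₀ hpos (by norm_num : (0:ℝ) < 2)] at *
              linarith
          _ < ε := by linarith
      · calc Metric.infDist (-c) (frechetNormalCone B b) ≤ dist (-c) (-c) :=
            Metric.infDist_le_dist_of_mem hcB
          _ = 0 := dist_self _
          _ < ε := hε
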